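/- Let X be a hypergeometric random variable Hyp(N, K, M) counting successes when drawing M items without replacement from a population of N items containing K successes. Then for all t > 0, P[X ≥ KM/N + t·M] ≤ exp(−2t²M) and P[X ≤ KM/N − t·M] ≤ exp(−2t²M). -/

import Mathlib

open Finset Real

lemma hyp_D_pos (p : ℝ) (hp0 : 0 ≤ p) (hp1 : p ≤ 1) (x : ℝ) :
    0 < 1 - p + p * Real.exp x := by
  have h := Real.exp_pos x
  rcases lt_or_eq_of_le hp1 with h1 | h1
  · nlinarith
  · subst h1; simpa using h

lemma hoeffding_scalar (p : ℝ) (hp0 : 0 ≤ p) (hp1 : p ≤ 1) (h : ℝ) (hh : 0 ≤ h) :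
    1 - p + p * Real.exp h ≤ Real.exp (p * h + h ^ 2 / 8) := by
  set D : ℝ → ℝ := fun x => 1 - p + p * Real.exp x with hD
  have hDpos : ∀ x, 0 < D x := fun x => hyp_D_pos p hp0 hp1 x
  set F : ℝ → ℝ := fun x => p * x + x ^ 2 / 8 - Real.log (D x) with hF
  set F' : ℝ → ℝ := fun x => p + x / 4 - p * Real.exp x / D x with hF'
  have hDd : ∀ x, HasDerivAt D (p * Real.exp x) x := by
    intro x
    exact ((Real.hasDerivAt_exp x).const_mul p).const_add (1 - p)
  have hFd : ∀ x, HasDerivAt F (F' x) x := by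
    intro x
    have h1 : HasDerivAt (fun x : ℝ => p * x + x ^ 2 / 8) (p + x / 4) x := by
      have : HasDerivAt (fun x : ℝ => p * x + x ^ 2 / 8) (p * 1 + (2 * x ^ 1) / 8) x := by
        exact ((hasDerivAt_id x).const_mul p).add ((hasDerivAt_pow 2 x).div_const 8)
      convert this using 1; ring
    have h2 : HasDerivAt (fun x => Real.log (D x)) (p * Real.exp x / D x) x :=
      (hDd x).log (hDpos x).ne'
    exact h1.sub h2
  have hF'd : ∀ x, HasDerivAt F'
      (1 / 4 - (p * Real.exp x / D x - (p * Real.exp x / D x) ^ 2)) x := by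
    intro x
    have hq : HasDerivAt (fun x => p * Real.exp x / D x)
        ((p * Real.exp x * D x - p * Real.exp x * (p * Real.exp x)) / (D x) ^ 2) x :=
      ((Real.hasDerivAt_exp x).const_mul p).div (hDd x) (hDpos x).ne'
    have h1 : HasDerivAt (fun x : ℝ => p + x / 4) (1 / 4) x := by
      simpa using ((hasDerivAt_id x).div_const 4).const_add p
    have hd : D x ≠ 0 := (hDpos x).ne'
    refine (h1.sub hq).congr_deriv ?_
    field_simp
  have hF'nonneg : ∀ x, 0 ≤ 1 / 4 - (p * Real.exp x / D x - (p * Real.exp x / D x) ^ 2) := by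
    intro x
    nlinarith [sq_nonneg (p * Real.exp x / D x - 1 / 2)]
  -- F' is monotone
  have hmono : Monotone F' := by
    apply monotone_of_deriv_nonneg
    · exact fun x => (hF'd x).differentiableAt
    · intro x
      rw [(hF'd x).deriv]
      exact hF'nonneg x
  have hF'0 : F' 0 = 0 := by
    simp only [hF', hD]
    rw [Real.exp_zero]
    have : 1 - p + p * 1 = 1 := by ring
    rw [this]
    ring
  have hF'nn : ∀ x ∈ Set.Ici (0:ℝ), 0 ≤ F' x := by
    intro x hx
    rw [← hF'0]
    exact hmono hx
  have hFmono : MonotoneOn F (Set.Ici 0) := by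
    apply monotoneOn_of_deriv_nonneg (convex_Ici 0)
    · exact (Differentiable.continuous (fun x => (hFd x).differentiableAt)).continuousOn
    · intro x _
      exact ((hFd x).differentiableAt).differentiableWithinAt
    · intro x hx
      rw [(hFd x).deriv]
      exact hF'nn x (interior_subset hx)
  have hF0 : F 0 = 0 := by
    simp only [hF, hD]
    rw [Real.exp_zero]
    have : 1 - p + p * 1 = 1 := by ring
    rw [this, Real.log_one]
    ring
  have hFh : 0 ≤ F h := by
    rw [← hF0]
    exact hFmono (Set.self_mem_Ici) (Set.mem_Ici.2 hh) hh
  have : Real.log (D h) ≤ p * h + h ^ 2 / 8 := by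
    simp only [hF] at hFh; linarith
  show D h ≤ Real.exp (p * h + h ^ 2 / 8)
  calc D h = Real.exp (Real.log (D h)) := (Real.exp_log (hDpos h)).symm
    _ ≤ _ := Real.exp_le_exp.2 this

-- descFactorial inequality
lemma hyp_descFactorial_le (N K : ℕ) (hK : K ≤ N) :
    ∀ j, K.descFactorial j * N ^ j ≤ N.descFactorial j * K ^ j := by
  intro j
  induction j with
  | zero => simp
  | succ j ih =>
    rw [Nat.descFactorial_succ, Nat.descFactorial_succ, pow_succ, pow_succ]
    have key : (K - j) * N ≤ (N - j) * K := by
      rcases le_or_gt j K with hj | hj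
      · rw [Nat.sub_mul, Nat.sub_mul]
        have h1 : j * K ≤ j * N := Nat.mul_le_mul_left j hK
        have h2 : j * N ≤ K * N := Nat.mul_le_mul_right N hj
        have h3 : K * N = N * K := Nat.mul_comm _ _
        omega
      · simp [Nat.sub_eq_zero_of_le hj.le]
    calc (K - j) * K.descFactorial j * (N ^ j * N)
        = ((K - j) * N) * (K.descFactorial j * N ^ j) := by ring
      _ ≤ ((N - j) * K) * (N.descFactorial j * K ^ j) :=
          Nat.mul_le_mul key ih
      _ = (N - j) * N.descFactorial j * (K ^ j * K) := by ring

-- choose inequality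
lemma hyp_choose_pow_le (N K : ℕ) (hK : K ≤ N) (j : ℕ) :
    K.choose j * N ^ j ≤ N.choose j * K ^ j := by
  have h := hyp_descFactorial_le N K hK j
  rw [Nat.descFactorial_eq_factorial_mul_choose, Nat.descFactorial_eq_factorial_mul_choose] at h
  rw [mul_assoc, mul_assoc] at h
  exact Nat.le_of_mul_le_mul_left h (Nat.factorial_pos j)

-- moment identity
lemma hyp_moment_identity (N K M : ℕ) (hK : K ≤ N) (hM : M ≤ N) (j : ℕ) (hj : j ≤ M) :
    ∑ x ∈ Finset.range (M + 1), x.choose j * (K.choose x * (N - K).choose (M - x))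
      = K.choose j * (N - j).choose (M - j) := by
  rcases le_or_gt j K with hjK | hjK
  · have hsplit : Finset.range (M + 1) = Finset.Ico 0 (M + 1) := by
      rw [Finset.range_eq_Ico]
    rw [hsplit, ← Finset.sum_Ico_consecutive _ (Nat.zero_le j) (by omega : j ≤ M + 1)]
    have h1 : ∑ x ∈ Finset.Ico 0 j, x.choose j * (K.choose x * (N - K).choose (M - x)) = 0 := by
      apply Finset.sum_eq_zero
      intro x hx
      rw [Finset.mem_Ico] at hx
      rw [Nat.choose_eq_zero_of_lt hx.2]
      ring
    rw [h1, zero_add, Finset.sum_Ico_eq_sum_range]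
    have h2 : ∀ i ∈ Finset.range (M + 1 - j),
        (j + i).choose j * (K.choose (j + i) * (N - K).choose (M - (j + i)))
          = K.choose j * ((K - j).choose i * (N - K).choose ((M - j) - i)) := by
      intro i _
      have hsub : M - (j + i) = (M - j) - i := by omega
      rw [hsub]
      rcases le_or_gt (j + i) K with hxK | hxK
      · have := Nat.choose_mul (n := K) (Nat.le_add_right j i)
        rw [Nat.add_sub_cancel_left] at this
        rw [← mul_assoc, ← mul_assoc, mul_comm ((j+i).choose j) (K.choose (j+i)), this]
      · have h3 : K.choose (j + i) = 0 := Nat.choose_eq_zero_of_lt hxK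
        have h4 : (K - j).choose i = 0 := Nat.choose_eq_zero_of_lt (by omega)
        rw [h3, h4]
        ring
    rw [Finset.sum_congr rfl h2, ← Finset.mul_sum]
    congr 1
    have hN : N - j = (K - j) + (N - K) := by omega
    rw [hN, Nat.add_choose_eq, Finset.Nat.sum_antidiagonal_eq_sum_range_succ_mk]
    have : M + 1 - j = (M - j) + 1 := by omega
    rw [this]
  · rw [Nat.choose_eq_zero_of_lt hjK, zero_mul]
    apply Finset.sum_eq_zero
    intro x _
    rcases le_or_gt x K with hxK | hxK
    · rw [Nat.choose_eq_zero_of_lt (lt_of_le_of_lt hxK hjK)]; ring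
    · rw [Nat.choose_eq_zero_of_lt hxK]; ring

-- per-j bound (Nat level)
lemma hyp_perj_nat (N K M : ℕ) (hK : K ≤ N) (hM : M ≤ N) (j : ℕ) (hj : j ≤ M) :
    K.choose j * (N - j).choose (M - j) * N ^ j ≤ M.choose j * K ^ j * N.choose M := by
  have hcm := Nat.choose_mul (n := N) hj
  calc K.choose j * (N - j).choose (M - j) * N ^ j
      = (K.choose j * N ^ j) * (N - j).choose (M - j) := by ring
    _ ≤ (N.choose j * K ^ j) * (N - j).choose (M - j) :=
        Nat.mul_le_mul_right _ (hyp_choose_pow_le N K hK j)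
    _ = (N.choose j * (N - j).choose (M - j)) * K ^ j := by ring
    _ = (N.choose M * M.choose j) * K ^ j := by rw [← hcm]
    _ = M.choose j * K ^ j * N.choose M := by ring

lemma hyp_mgf_le (N K M : ℕ) (hN : 0 < N) (hK : K ≤ N) (hM : M ≤ N) (h : ℝ) (hh : 0 ≤ h) :
    ∑ x ∈ Finset.range (M + 1),
      (K.choose x * (N - K).choose (M - x) : ℝ) / (N.choose M : ℝ) * Real.exp (h * x)
    ≤ (1 - (K : ℝ) / N + (K : ℝ) / N * Real.exp h) ^ M := by
  set p : ℝ := (K : ℝ) / N with hp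
  set c : ℝ := Real.exp h - 1 with hc
  have hc0 : 0 ≤ c := by
    have := Real.one_le_exp hh
    simp [hc]; linarith
  have hCpos : (0 : ℝ) < (N.choose M : ℝ) := by
    exact_mod_cast Nat.choose_pos hM
  have hexp : ∀ x : ℕ, x ≤ M → Real.exp (h * x)
      = ∑ j ∈ Finset.range (M + 1), (x.choose j : ℝ) * c ^ j := by
    intro x hx
    have h1 : Real.exp (h * x) = (Real.exp h) ^ x := by
      rw [mul_comm, Real.exp_nat_mul]
    have h2 : (Real.exp h) ^ x = (c + 1) ^ x := by rw [hc]; ring_nf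
    rw [h1, h2, add_pow]
    rw [Finset.sum_subset (Finset.range_subset_range.2 (by omega : x + 1 ≤ M + 1))]
    · apply Finset.sum_congr rfl
      intro j _
      rw [one_pow]; ring
    · intro j _ hj
      rw [Finset.mem_range, not_lt] at hj
      rw [Nat.choose_eq_zero_of_lt (by omega)]
      simp
  calc ∑ x ∈ Finset.range (M + 1),
        (K.choose x * (N - K).choose (M - x) : ℝ) / (N.choose M : ℝ) * Real.exp (h * x)
      = ∑ x ∈ Finset.range (M + 1), ∑ j ∈ Finset.range (M + 1),
          (K.choose x * (N - K).choose (M - x) : ℝ) / (N.choose M : ℝ)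
            * ((x.choose j : ℝ) * c ^ j) := by
        apply Finset.sum_congr rfl
        intro x hx
        rw [Finset.mem_range] at hx
        rw [hexp x (by omega), Finset.mul_sum]
    _ = ∑ j ∈ Finset.range (M + 1), c ^ j *
          ((∑ x ∈ Finset.range (M + 1),
            (x.choose j : ℝ) * (K.choose x * (N - K).choose (M - x) : ℝ)) / (N.choose M : ℝ)) := by
        rw [Finset.sum_comm]
        apply Finset.sum_congr rfl
        intro j _
        rw [Finset.sum_div, Finset.mul_sum]
        apply Finset.sum_congr rfl
        intro x _
        ring
    _ ≤ ∑ j ∈ Finset.range (M + 1), c ^ j * ((M.choose j : ℝ) * p ^ j) := by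
        apply Finset.sum_le_sum
        intro j hj
        rw [Finset.mem_range] at hj
        apply mul_le_mul_of_nonneg_left _ (pow_nonneg hc0 j)
        have hident : ∑ x ∈ Finset.range (M + 1),
            (x.choose j : ℝ) * (K.choose x * (N - K).choose (M - x) : ℝ)
            = (K.choose j * (N - j).choose (M - j) : ℝ) := by
          have := hyp_moment_identity N K M hK hM j (by omega)
          exact_mod_cast congrArg (fun n : ℕ => (n : ℝ)) this
        rw [hident]
        rw [div_le_iff₀ hCpos]
        have hnat := hyp_perj_nat N K M hK hM j (by omega)
        have hreal : (K.choose j * (N - j).choose (M - j) : ℝ) * (N : ℝ) ^ j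
            ≤ (M.choose j : ℝ) * (K : ℝ) ^ j * (N.choose M : ℝ) := by
          exact_mod_cast hnat
        have hNj : (0 : ℝ) < (N : ℝ) ^ j :=
          pow_pos (by exact_mod_cast hN) j
        rw [hp, div_pow]
        have hrw : (M.choose j:ℝ) * ((K:ℝ)^j / (N:ℝ)^j) * (N.choose M:ℝ)
            = (M.choose j:ℝ) * (K:ℝ)^j * (N.choose M:ℝ) / (N:ℝ)^j := by ring
        rw [hrw, le_div_iff₀ hNj]
        linarith [hreal]
    _ ≤ (1 - p + p * Real.exp h) ^ M := by
        have : (1 : ℝ) - p + p * Real.exp h = p * c + 1 := by rw [hc]; ring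
        rw [this, add_pow]
        apply le_of_eq
        apply Finset.sum_congr rfl
        intro j _
        rw [one_pow, mul_pow]
        ring

lemma hyp_upper_tail (N K M : ℕ) (hN : 0 < N) (hK : K ≤ N) (hM : M ≤ N)
    (t : ℝ) (ht : 0 < t) :
    (∑ x ∈ (Finset.range (M + 1)).filter
        (fun x : ℕ => (K : ℝ) * M / N + t * M ≤ (x : ℝ)),
        (K.choose x * (N - K).choose (M - x) : ℝ) / (N.choose M : ℝ)) ≤
      Real.exp (-2 * t ^ 2 * M) := by
  set p : ℝ := (K : ℝ) / N with hp
  set h : ℝ := 4 * t with hh'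
  have hh : 0 ≤ h := by positivity
  have hNpos : (0 : ℝ) < N := by exact_mod_cast hN
  have hp0 : 0 ≤ p := by positivity
  have hp1 : p ≤ 1 := by
    rw [hp, div_le_one hNpos]; exact_mod_cast hK
  have hpM : (K : ℝ) * M / N = p * M := by rw [hp]; ring
  have hanon : ∀ x : ℕ, 0 ≤ (K.choose x * (N - K).choose (M - x) : ℝ) / (N.choose M : ℝ) := by
    intro x; positivity
  set B : ℝ := h * (p * M + t * M) with hB
  calc (∑ x ∈ (Finset.range (M + 1)).filter
        (fun x : ℕ => (K : ℝ) * M / N + t * M ≤ (x : ℝ)),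
        (K.choose x * (N - K).choose (M - x) : ℝ) / (N.choose M : ℝ))
      ≤ ∑ x ∈ (Finset.range (M + 1)).filter
        (fun x : ℕ => (K : ℝ) * M / N + t * M ≤ (x : ℝ)),
        (K.choose x * (N - K).choose (M - x) : ℝ) / (N.choose M : ℝ)
          * (Real.exp (h * x) * Real.exp (-B)) := by
        apply Finset.sum_le_sum
        intro x hx
        rw [Finset.mem_filter] at hx
        have hcond := hx.2
        rw [hpM] at hcond
        have h1 : (1 : ℝ) ≤ Real.exp (h * x) * Real.exp (-B) := by
          rw [← Real.exp_add, ← Real.exp_zero]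
          apply Real.exp_le_exp.2
          rw [hB]
          nlinarith
        nlinarith [hanon x]
    _ = Real.exp (-B) * ∑ x ∈ (Finset.range (M + 1)).filter
        (fun x : ℕ => (K : ℝ) * M / N + t * M ≤ (x : ℝ)),
        (K.choose x * (N - K).choose (M - x) : ℝ) / (N.choose M : ℝ) * Real.exp (h * x) := by
        rw [Finset.mul_sum]
        apply Finset.sum_congr rfl
        intro x _; ring
    _ ≤ Real.exp (-B) * ∑ x ∈ Finset.range (M + 1),
        (K.choose x * (N - K).choose (M - x) : ℝ) / (N.choose M : ℝ) * Real.exp (h * x) := by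
        apply mul_le_mul_of_nonneg_left _ (Real.exp_pos _).le
        apply Finset.sum_le_sum_of_subset_of_nonneg (Finset.filter_subset _ _)
        intro x _ _
        exact mul_nonneg (hanon x) (Real.exp_pos _).le
    _ ≤ Real.exp (-B) * (1 - p + p * Real.exp h) ^ M :=
        mul_le_mul_of_nonneg_left (hyp_mgf_le N K M hN hK hM h hh) (Real.exp_pos _).le
    _ ≤ Real.exp (-B) * Real.exp ((p * h + h ^ 2 / 8) * M) := by
        apply mul_le_mul_of_nonneg_left _ (Real.exp_pos _).le
        have hDle := hoeffding_scalar p hp0 hp1 h hh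
        have hD0 := (hyp_D_pos p hp0 hp1 h).le
        calc (1 - p + p * Real.exp h) ^ M
            ≤ (Real.exp (p * h + h ^ 2 / 8)) ^ M := pow_le_pow_left₀ hD0 hDle M
          _ = Real.exp ((p * h + h ^ 2 / 8) * M) := by
              rw [mul_comm (p * h + h ^ 2 / 8) (M:ℝ), Real.exp_nat_mul]
    _ ≤ Real.exp (-2 * t ^ 2 * M) := by
        rw [← Real.exp_add]
        apply Real.exp_le_exp.2
        have hq : p * t * (M:ℝ) * 4 ≤ p * t * (M:ℝ) * 4 := le_refl _
        rw [hB, hh']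
        nlinarith [mul_nonneg (mul_nonneg hp0 ht.le) (Nat.cast_nonneg M)]

/-- Hoeffding tail bounds for the hypergeometric distribution `Hyp(N, K, M)`:
for `t > 0`, the probability that the number of successes exceeds `KM/N + tM`
(resp. falls below `KM/N − tM`) is at most `exp(−2t²M)`. -/
theorem hypergeometric_tail_bounds (N K M : ℕ) (hN : 0 < N) (hK : K ≤ N)
    (hM : M ≤ N) (hMpos : 0 < M) (t : ℝ) (ht : 0 < t) :
    (∑ x ∈ (Finset.range (M + 1)).filter
        (fun x : ℕ => (K : ℝ) * M / N + t * M ≤ (x : ℝ)),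
        (K.choose x * (N - K).choose (M - x) : ℝ) / (N.choose M : ℝ)) ≤
      Real.exp (-2 * t ^ 2 * M) ∧
    (∑ x ∈ (Finset.range (M + 1)).filter
        (fun x : ℕ => (x : ℝ) ≤ (K : ℝ) * M / N - t * M),
        (K.choose x * (N - K).choose (M - x) : ℝ) / (N.choose M : ℝ)) ≤
      Real.exp (-2 * t ^ 2 * M) := by
  constructor
  · exact hyp_upper_tail N K M hN hK hM t ht
  · have hK' : N - K ≤ N := Nat.sub_le N K
    have hupper := hyp_upper_tail N (N - K) M hN hK' hM t ht
    have hNpos : (0 : ℝ) < N := by exact_mod_cast hN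
    -- rewrite both sums as sums over range with `if`
    rw [Finset.sum_filter] at hupper ⊢
    have hreflect := Finset.sum_range_reflect
      (fun y : ℕ => if ((N - K : ℕ) : ℝ) * M / N + t * M ≤ (y : ℝ) then
        ((N - K).choose y * (N - (N - K)).choose (M - y) : ℝ) / (N.choose M : ℝ) else 0) (M + 1)
    rw [← hreflect] at hupper
    refine le_trans (le_of_eq ?_) hupper
    apply Finset.sum_congr rfl
    intro x hx
    rw [Finset.mem_range] at hx
    have hxM : x ≤ M := by omega
    have hMx : M + 1 - 1 - x = M - x := by omega
    rw [hMx]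
    have hcast1 : ((N - K : ℕ) : ℝ) = (N : ℝ) - K := by
      exact Nat.cast_sub hK
    have hcast2 : ((M - x : ℕ) : ℝ) = (M : ℝ) - x := by
      exact Nat.cast_sub hxM
    have hiff : ((x : ℝ) ≤ (K : ℝ) * M / N - t * M) ↔
        (((N - K : ℕ) : ℝ) * M / N + t * M ≤ ((M - x : ℕ) : ℝ)) := by
      rw [hcast1, hcast2]
      rw [sub_mul, sub_div]
      have hNN : (N : ℝ) * M / N = (M : ℝ) := by field_simp
      rw [hNN]
      constructor <;> intro hle <;> linarith
    have hval : (K.choose x * (N - K).choose (M - x) : ℝ) / (N.choose M : ℝ)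
        = ((N - K).choose (M - x) * (N - (N - K)).choose (M - (M - x)) : ℝ)
            / (N.choose M : ℝ) := by
      have h1 : N - (N - K) = K := by omega
      have h2 : M - (M - x) = x := by omega
      rw [h1, h2, mul_comm]
    by_cases hcond : (x : ℝ) ≤ (K : ℝ) * M / N - t * M
    · rw [if_pos hcond, if_pos (hiff.mp hcond), hval]
    · rw [if_neg hcond, if_neg (fun hc => hcond (hiff.mpr hc))]
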